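/- arXiv:1511.08318 — 5 statements merged into one kernel-verified Lean document; each statement's English description precedes it below -/
import Mathlib

section
/- Let F be a field of characteristic p with a discrete valuation v, and let λ ∈ F satisfy v(λ − 1) = r with 0 < r < ∞. Then for every positive integer k, v(λ^k − 1) = r·p^(v_p(k)), where v_p(k) denotes the p-adic valuation of k. -/
private lemma nsmul_coe_withTop (n : ℕ) (x : ℤ) :
    n • ((x : WithTop ℤ)) = ((n * x : ℤ) : WithTop ℤ) := by
  induction n with
  | zero => simp
  | succ m ih =>
    rw [succ_nsmul, ih, ← WithTop.coe_add]
    congr 1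
    push_cast
    ring

/-- If `F` has characteristic `p` with discrete valuation `v` and `v(λ - 1) = r` with
`0 < r < ∞`, then for every `k ≥ 1`, `v(λ^k - 1) = r * p^(v_p k)`. -/
theorem stmt1 (F : Type*) [Field F] (p : ℕ) [Fact p.Prime] [CharP F p]
    (v : AddValuation F (WithTop ℤ)) (lam : F) (r : ℤ) (hr : 0 < r)
    (hv : v (lam - 1) = (r : WithTop ℤ)) (k : ℕ) (hk : 0 < k) :
    v (lam ^ k - 1) = ((r * p ^ padicValNat p k : ℤ) : WithTop ℤ) := by
  have hp := (Fact.out : p.Prime)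
  -- valuation of integers prime to p is 0
  have hvnat : ∀ n : ℕ, ¬ p ∣ n → v (n : F) = 0 := by
    intro n hn
    have hn0 : (n : F) ≠ 0 := by
      intro h
      exact hn ((CharP.cast_eq_zero_iff F p n).mp h)
    have hpow : ((n : F)) ^ (p - 1) = 1 := by
      have : ((n : ZMod p)) ^ (p - 1) = 1 := by
        apply ZMod.pow_card_sub_one_eq_one
        intro h
        exact hn ((ZMod.natCast_eq_zero_iff n p).mp h)
      have := congrArg (ZMod.castHom dvd_rfl F) this
      simpa using this
    have hvp : (p - 1) • v (n : F) = 0 := by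
      rw [← AddValuation.map_pow, hpow, AddValuation.map_one]
    have hnt : v (n : F) ≠ ⊤ := (AddValuation.ne_top_iff v).mpr hn0
    obtain ⟨x, hx⟩ := WithTop.ne_top_iff_exists.mp hnt
    rw [← hx] at hvp ⊢
    rw [nsmul_coe_withTop] at hvp
    have : ((p : ℤ) - 1) * x = 0 := by
      have := WithTop.coe_injective hvp
      rw [show ((p:ℤ) - 1) = ((p - 1 : ℕ) : ℤ) by
        have := hp.two_le; omega] at *
      exact this
    have hx0 : x = 0 := by
      rcases mul_eq_zero.mp this with h | h
      · exfalso; have := hp.two_le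
        have : (2 : ℤ) ≤ p := by exact_mod_cast this
        omega
      · exact h
    rw [hx0]; rfl
  -- v(μ^n - 1) ≥ v(μ - 1) when v(μ-1) > 0
  have hgeom : ∀ (μ : F) (n : ℕ), 0 < v (μ - 1) → v (μ - 1) ≤ v (μ ^ n - 1) := by
    intro μ n hμ
    have hvμ : v μ = 0 := by
      have : v (1 + (μ - 1)) = v 1 := by
        apply AddValuation.map_add_eq_of_lt_left
        simpa using hμ
      simpa using this
    rw [← geom_sum_mul, AddValuation.map_mul]
    have : (0 : WithTop ℤ) ≤ v (∑ i ∈ Finset.range n, μ ^ i) := by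
      apply AddValuation.map_le_sum
      intro i _
      rw [AddValuation.map_pow, hvμ, smul_zero]
    calc v (μ - 1) = 0 + v (μ - 1) := by rw [zero_add]
      _ ≤ _ := add_le_add_left this _
  -- key: for p ∤ m, v(μ^m - 1) = v(μ - 1)
  have hcop : ∀ (μ : F) (m : ℕ), 0 < m → ¬ p ∣ m → 0 < v (μ - 1) →
      v (μ ^ m - 1) = v (μ - 1) := by
    intro μ m hm hpm hμ
    rw [← geom_sum_mul, AddValuation.map_mul]
    have hsum : v (∑ i ∈ Finset.range m, μ ^ i) = 0 := by
      have hsplit : (∑ i ∈ Finset.range m, μ ^ i)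
          = (m : F) + ∑ i ∈ Finset.range m, (μ ^ i - 1) := by
        rw [Finset.sum_sub_distrib]
        simp [mul_comm]
      rw [hsplit]
      rw [AddValuation.map_add_eq_of_lt_left]
      · exact hvnat m hpm
      · rw [hvnat m hpm]
        apply AddValuation.map_lt_sum
        · exact WithTop.zero_ne_top
        · intro i _
          exact lt_of_lt_of_le hμ (hgeom μ i hμ)
    rw [hsum, zero_add]
  -- main computation
  set e := padicValNat p k with he
  set m := k / p ^ e with hm
  have hdvd : p ^ e ∣ k := pow_padicValNat_dvd
  have hkm : k = p ^ e * m := by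
    rw [hm, Nat.mul_div_cancel' hdvd]
  have hmpos : 0 < m := Nat.div_pos (Nat.le_of_dvd hk hdvd) (pow_pos hp.pos e)
  have hpm : ¬ p ∣ m := by
    intro hdm
    apply pow_succ_padicValNat_not_dvd hk.ne' (p := p)
    calc p ^ (e + 1) ∣ p ^ e * m := by rw [pow_succ]; exact mul_dvd_mul_left _ hdm
      _ ∣ k := by rw [← hkm]
  have hfrob : v (lam ^ p ^ e - 1) = ((r * p ^ e : ℤ) : WithTop ℤ) := by
    rw [show lam ^ p ^ e - 1 = (lam - 1) ^ p ^ e by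
      rw [sub_pow_char_pow]; simp]
    rw [AddValuation.map_pow, hv, nsmul_coe_withTop]
    congr 1
    push_cast
    ring
  have hpos' : 0 < v (lam ^ p ^ e - 1) := by
    rw [hfrob]
    have : (0:ℤ) < r * (p:ℤ) ^ e :=
      mul_pos hr (pow_pos (by exact_mod_cast hp.pos) e)
    exact_mod_cast this
  rw [hkm, pow_mul]
  rw [hcop _ m hmpos hpm hpos', hfrob]
end

section
/- Let F be a field of characteristic p with discrete valuation v and λ ∈ F with v(λ − 1) = r, 0 < r < ∞. Then for every n > r, the quantity m_n(λ) = min{k ≥ 1 : v(λ^k − 1) ≥ n} satisfies m_n(λ) < (p/r)·n; in particular the sequence (m_n(λ))_n grows at most linearly in n. -/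
/-- Linear growth: with `v(λ - 1) = r`, `0 < r < ∞`, for `n > r` the quantity
`m_n(λ) = min {k ≥ 1 : v(λ^k - 1) ≥ n}` satisfies `m_n(λ) < (p/r)·n`,
stated as `r · m_n(λ) < p · n`. -/
theorem stmt4 (F : Type*) [Field F] (p : ℕ) [Fact p.Prime] [CharP F p]
    (v : AddValuation F (WithTop ℤ)) (lam : F) (r : ℤ) (hr : 0 < r)
    (hv : v (lam - 1) = (r : WithTop ℤ)) (n : ℤ) (hn : r < n) :
    r * ((sInf {k : ℕ | 0 < k ∧ (n : WithTop ℤ) ≤ v (lam ^ k - 1)} : ℕ) : ℤ) < p * n := by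
  have hp : p.Prime := Fact.out
  have hp1 : (1:ℤ) < p := by exact_mod_cast hp.one_lt
  have hr1 : (1:ℤ) ≤ r := hr
  have key : ∀ j : ℕ, v (lam ^ (p^j) - 1) = (((p:ℤ)^j * r : ℤ) : WithTop ℤ) := by
    intro j
    have h1 : lam ^ (p^j) - 1 = (lam - 1) ^ (p^j) := by
      rw [sub_pow_char_pow (R := F) lam 1, one_pow]
    rw [h1, AddValuation.map_pow, hv]
    have h2 : ((p:ℤ)^j * r : ℤ) = (p^j : ℕ) • r := by
      simp [nsmul_eq_mul]
    rw [h2, WithTop.coe_nsmul]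
  have hex : ∃ j : ℕ, n ≤ (p:ℤ)^j * r := by
    obtain ⟨j, hj⟩ := pow_unbounded_of_one_lt n hp1
    exact ⟨j, le_trans hj.le (le_mul_of_one_le_right (by positivity) hr1)⟩
  set j := Nat.find hex with hjdef
  have hjle : n ≤ (p:ℤ)^j * r := Nat.find_spec hex
  have hjpos : 0 < j := by
    rcases Nat.eq_zero_or_pos j with h | h
    · exfalso
      rw [h] at hjle
      simp at hjle
      omega
    · exact h
  have hmin : (p:ℤ)^(j-1) * r < n :=
    lt_of_not_ge (Nat.find_min hex (show j - 1 < j by omega))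
  have hmem : p^j ∈ {k : ℕ | 0 < k ∧ (n : WithTop ℤ) ≤ v (lam ^ k - 1)} := by
    refine ⟨pow_pos hp.pos j, ?_⟩
    rw [key j]
    exact_mod_cast hjle
  have hsle : sInf {k : ℕ | 0 < k ∧ (n : WithTop ℤ) ≤ v (lam ^ k - 1)} ≤ p^j :=
    Nat.sInf_le hmem
  have hsle' : ((sInf {k : ℕ | 0 < k ∧ (n : WithTop ℤ) ≤ v (lam ^ k - 1)} : ℕ) : ℤ) ≤ (p:ℤ)^j := by
    exact_mod_cast hsle
  have hpj : (p:ℤ)^j = p * (p:ℤ)^(j-1) := by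
    rw [← pow_succ']
    congr 1
    omega
  have hpow_nonneg : (0:ℤ) ≤ (p:ℤ)^(j-1) := by positivity
  calc r * ((sInf {k : ℕ | 0 < k ∧ (n : WithTop ℤ) ≤ v (lam ^ k - 1)} : ℕ) : ℤ)
      ≤ r * (p:ℤ)^j := by
        exact mul_le_mul_of_nonneg_left hsle' hr.le
    _ < p * n := by
        rw [hpj]
        nlinarith [hmin, hp1, hpow_nonneg, hr]
end

section
/- Let F be a field of characteristic p with discrete valuation v and λ ∈ F with v(λ − 1) = r, 0 < r < ∞. Then for every k ≥ 1, m_{r·p^k}(λ) = p^k, where m_n(λ) = min{j ≥ 1 : v(λ^j − 1) ≥ n}. -/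
open Finset

section Aux

variable {F : Type*} [Field F] (p : ℕ) [Fact p.Prime] [CharP F p]
  (v : AddValuation F (WithTop ℤ))

lemma aux_coe_nsmul (n : ℕ) (a : ℤ) : n • ((a : WithTop ℤ)) = ((n • a : ℤ) : WithTop ℤ) := by
  induction n with
  | zero => simp
  | succ n ih => rw [succ_nsmul, succ_nsmul, ih, ← WithTop.coe_add]

/-- value of a natural number coprime to p is 0 -/
lemma aux_val_nat (u : ℕ) (hu : ¬ p ∣ u) : v (u : F) = 0 := by
  have hp : p.Prime := Fact.out
  have hne : (u : F) ≠ 0 := by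
    rw [Ne, CharP.cast_eq_zero_iff F p]; exact hu
  -- (u : F)^(p-1) = 1
  have hcast : (ZMod.castHom dvd_rfl F) ((u : ZMod p)) = (u : F) := by
    simp [map_natCast]
  have hz : (u : ZMod p) ≠ 0 := by
    rw [Ne, ZMod.natCast_eq_zero_iff]; exact hu
  have hpow : (u : F) ^ (p - 1) = 1 := by
    rw [← hcast, ← map_pow]
    rw [ZMod.pow_card_sub_one_eq_one hz]
    simp
  have h1 : (p - 1) • v (u : F) = 0 := by
    rw [← AddValuation.map_pow, hpow, AddValuation.map_one]
  have hnt : v (u : F) ≠ ⊤ := (v.ne_top_iff).2 hne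
  obtain ⟨a, ha⟩ := WithTop.ne_top_iff_exists.1 hnt
  rw [← ha, aux_coe_nsmul] at h1
  have hp1 : p - 1 ≠ 0 := by
    have := hp.two_le; omega
  have : (p - 1) • a = 0 := by exact_mod_cast h1
  have : a = 0 := by
    rcases smul_eq_zero.1 this with h | h
    · exact absurd h hp1
    · exact h
  rw [← ha, this]; rfl

variable {v} in
/-- powers stay close to 1 -/
lemma aux_pow_pos {x : F} (hx : 0 < v (x - 1)) (i : ℕ) : 0 < v (x ^ i - 1) := by
  have hvx : v x = 0 := by
    have : v (1 + (x - 1)) = v (1 : F) := by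
      apply AddValuation.map_add_eq_of_lt_left
      simpa using hx
    simpa using this
  induction i with
  | zero => simp
  | succ i ih =>
    have key : x ^ (i + 1) - 1 = x * (x ^ i - 1) + (x - 1) := by ring
    rw [key]
    refine lt_of_lt_of_le (lt_min ?_ hx) (v.map_add _ _)
    rw [AddValuation.map_mul, hvx, zero_add]
    exact ih

variable {v} in
/-- the valuation of the geometric sum is 0 -/
lemma aux_geom_sum {x : F} (hx : 0 < v (x - 1)) {u : ℕ} (hu : ¬ p ∣ u) :
    v (∑ i ∈ range u, x ^ i) = 0 := by
  have hsum : (∑ i ∈ range u, x ^ i) = (∑ i ∈ range u, (x ^ i - 1)) + (u : F) := by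
    rw [Finset.sum_sub_distrib]
    simp
  have hpos : 0 < v (∑ i ∈ range u, (x ^ i - 1)) := by
    apply v.map_lt_sum' (by simp)
    intro i _
    exact aux_pow_pos hx i
  rw [hsum, AddValuation.map_add_eq_of_lt_right, aux_val_nat p v u hu]
  rw [aux_val_nat p v u hu]
  exact hpos

variable {v} in
/-- v(x^u - 1) = v(x - 1) when p ∤ u -/
lemma aux_coprime_pow {x : F} (hx : 0 < v (x - 1)) {u : ℕ} (hu : ¬ p ∣ u) :
    v (x ^ u - 1) = v (x - 1) := by
  have := geom_sum_mul x u
  rw [← this, AddValuation.map_mul, aux_geom_sum p hx hu, zero_add]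

variable {v} in
/-- v(λ^{p^m} - 1) = p^m * r -/
lemma aux_frob_pow {lam : F} {r : ℤ} (hv : v (lam - 1) = (r : WithTop ℤ)) (m : ℕ) :
    v (lam ^ (p ^ m) - 1) = ((p ^ m * r : ℤ) : WithTop ℤ) := by
  have key : lam ^ (p ^ m) - 1 = (lam - 1) ^ (p ^ m) := by
    rw [sub_pow_char_pow]
    simp
  rw [key, AddValuation.map_pow, hv, aux_coe_nsmul]
  congr 1

end Aux

/-- With `v(λ - 1) = r`, `0 < r < ∞`, in characteristic `p`:
for every `k ≥ 1`, `m_{r·p^k}(λ) = p^k`. -/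
theorem stmt5 (F : Type*) [Field F] (p : ℕ) [Fact p.Prime] [CharP F p]
    (v : AddValuation F (WithTop ℤ)) (lam : F) (r : ℤ) (hr : 0 < r)
    (hv : v (lam - 1) = (r : WithTop ℤ)) (k : ℕ) (hk : 1 ≤ k) :
    sInf {j : ℕ | 0 < j ∧ ((r * p ^ k : ℤ) : WithTop ℤ) ≤ v (lam ^ j - 1)} = p ^ k := by
  have hp : p.Prime := Fact.out
  -- General formula: for 0 < j, v(λ^j - 1) = r * p^(j.factorization p)
  have main : ∀ j : ℕ, 0 < j →
      v (lam ^ j - 1) = ((p ^ (j.factorization p) * r : ℤ) : WithTop ℤ) := by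
    intro j hj
    set m := j.factorization p with hm
    have hjeq : p ^ m * (j / p ^ m) = j := Nat.ordProj_mul_ordCompl_eq_self j p
    have hnd : ¬ p ∣ (j / p ^ m) := Nat.not_dvd_ordCompl hp hj.ne'
    have hfrob : v (lam ^ (p ^ m) - 1) = ((p ^ m * r : ℤ) : WithTop ℤ) :=
      aux_frob_pow p hv m
    have hpos : 0 < v (lam ^ (p ^ m) - 1) := by
      rw [hfrob]
      exact_mod_cast mul_pos (pow_pos (show (0:ℤ) < (p:ℤ) by exact_mod_cast hp.pos) m) hr
    have := aux_coprime_pow (v := v) p hpos hnd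
    rw [← pow_mul, hjeq] at this
    rw [this, hfrob]
  have hpk : 0 < p ^ k := pow_pos hp.pos k
  have hmem : (p ^ k) ∈ {j : ℕ | 0 < j ∧ ((r * p ^ k : ℤ) : WithTop ℤ) ≤ v (lam ^ j - 1)} := by
    constructor
    · exact hpk
    · rw [main (p ^ k) hpk]
      have : (p ^ k : ℕ).factorization p = k := Nat.Prime.factorization_pow hp ▸ by simp
      rw [this]
      exact_mod_cast le_of_eq (mul_comm r (p ^ k : ℤ))
  refine le_antisymm (Nat.sInf_le hmem) ?_
  refine le_csInf ⟨_, hmem⟩ ?_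
  rintro j ⟨hj, hle⟩
  rw [main j hj] at hle
  have hle' : r * p ^ k ≤ p ^ (j.factorization p) * r := by exact_mod_cast hle
  have hkm : k ≤ j.factorization p := by
    rw [mul_comm] at hle'
    have := le_of_mul_le_mul_right hle' hr
    have hp1 : (1 : ℤ) < p := by exact_mod_cast hp.one_lt
    exact (pow_le_pow_iff_right₀ hp1).1 this
  calc p ^ k ≤ p ^ (j.factorization p) := Nat.pow_le_pow_right hp.pos hkm
    _ ≤ j := Nat.le_of_dvd hj (Nat.ordProj_dvd j p)
end

section
/- Let K = 𝔽_q(Y), let v_∞ be the valuation on K with v_∞(f) = −deg(f) for nonzero polynomials f ∈ 𝔽_q[Y], and for each monic irreducible polynomial π let v_π be the π-adic valuation with associated absolute value |x|_π = q^(−deg(π)·v_π(x)) and |x|_∞ = q^(−v_∞(x)). Then for every nonzero x ∈ K, the product of |x|_∞ and all |x|_π over monic irreducible π equals 1 (equivalently, deg(f) = Σ_π deg(π)·v_π(f) for nonzero f ∈ 𝔽_q[Y]). -/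
/-- Product formula for `𝔽_q(Y)`, in its equivalent form: for every nonzero polynomial
`f ∈ 𝔽_q[Y]`, `deg f = Σ_π deg(π)·v_π(f)`, i.e. the degree of `f` is the sum of the
degrees of its irreducible factors counted with multiplicity. -/
theorem stmt8 (Fq : Type*) [Field Fq] [Fintype Fq] (f : Polynomial Fq) (hf : f ≠ 0) :
    f.natDegree =
      ((UniqueFactorizationMonoid.factors f).map Polynomial.natDegree).sum := by
  obtain ⟨u, hu⟩ := UniqueFactorizationMonoid.factors_prod hf
  have hp0 : (UniqueFactorizationMonoid.factors f).prod ≠ 0 := by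
    intro h0; rw [h0, zero_mul] at hu; exact hf hu.symm
  have hd : f.natDegree = ((UniqueFactorizationMonoid.factors f).prod).natDegree := by
    conv_lhs => rw [← hu]
    rw [Polynomial.natDegree_mul hp0 (Units.ne_zero u),
      Polynomial.natDegree_eq_zero_of_isUnit u.isUnit, Nat.add_zero]
  rw [hd, Polynomial.natDegree_multiset_prod]
  intro hp
  exact (UniqueFactorizationMonoid.irreducible_of_factor 0 hp).ne_zero rfl
end

section
/- Let p be a prime, n a positive integer with base-p expansion n = Σ_{i=0}^s a_i p^i, and let R be a commutative ring of characteristic p with an ideal I. Then for every x ∈ I, (1+x)^n − 1 ∈ I^(p^(v_p(n))), where v_p(n) is the p-adic valuation of n. Moreover if I is the maximal ideal of a discrete valuation ring of characteristic p and x has valuation exactly r > 0 and the lowest digit a_{v_p(n)} ≠ 0, then (1+x)^n − 1 has valuation exactly r·p^(v_p(n)). -/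
/-- Auxiliary: `(1+y)^m - 1 = y * (m + y * z)` for some `z`. -/
lemma aux_expand {R : Type*} [CommRing R] (y : R) (m : ℕ) :
    ∃ z : R, (1 + y) ^ m - 1 = y * ((m : R) + y * z) := by
  induction m with
  | zero => exact ⟨0, by ring⟩
  | succ m ih =>
    obtain ⟨z, hz⟩ := ih
    refine ⟨z + (m : R) + y * z, ?_⟩
    have : (1 + y) ^ (m + 1) = (1 + y) ^ m * (1 + y) := by ring
    rw [this]
    have h2 : (1 + y) ^ m = 1 + y * ((m : R) + y * z) := by
      rw [sub_eq_iff_eq_add] at hz; rw [hz]; ring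
    rw [h2]
    push_cast
    ring

/-- Auxiliary: in a ring of characteristic `p`, `(m : O)` is a unit when `p ∤ m`. -/
lemma aux_unit {p : ℕ} (hp : p.Prime) {O : Type*} [CommRing O] [CharP O p]
    {m : ℕ} (hm : ¬ p ∣ m) : IsUnit (m : O) := by
  haveI : Fact p.Prime := ⟨hp⟩
  have h1 : (m : ZMod p) ≠ 0 := by
    simpa [ZMod.natCast_eq_zero_iff] using hm
  have h2 : IsUnit (m : ZMod p) := h1.isUnit
  have := h2.map (ZMod.castHom (dvd_refl p) O)
  simpa using this

/-- Auxiliary: key decomposition. -/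
lemma aux_key {p : ℕ} (hp : p.Prime) {R : Type*} [CommRing R] [CharP R p]
    {n k m : ℕ} (hnm : p ^ k * m = n) (x : R) :
    ∃ z : R, (1 + x) ^ n - 1 = x ^ p ^ k * ((m : R) + x ^ p ^ k * z) := by
  haveI : Fact p.Prime := ⟨hp⟩
  obtain ⟨z, hz⟩ := aux_expand (x ^ p ^ k) m
  refine ⟨z, ?_⟩
  have hfrob : (1 + x) ^ p ^ k = 1 + x ^ p ^ k := by
    simpa using add_pow_char_pow (1 : R) x p k
  calc (1 + x) ^ n - 1 = ((1 + x) ^ p ^ k) ^ m - 1 := by rw [← pow_mul, hnm]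
    _ = (1 + x ^ p ^ k) ^ m - 1 := by rw [hfrob]
    _ = x ^ p ^ k * ((m : R) + x ^ p ^ k * z) := hz

/-- For `R` of characteristic `p`, an ideal `I` and `x ∈ I`: `(1+x)^n − 1 ∈ I^(p^(v_p n))`.
Moreover, in a DVR of characteristic `p`, if `x` has valuation exactly `r > 0`, then
`(1+x)^n − 1` has valuation exactly `r·p^(v_p n)`. -/
theorem stmt15 (p : ℕ) (hp : p.Prime) (R : Type*) [CommRing R] [CharP R p] (I : Ideal R)
    (O : Type*) [CommRing O] [IsDomain O] [IsDiscreteValuationRing O] [CharP O p]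
    (n : ℕ) (hn : 0 < n) :
    (∀ x ∈ I, (1 + x) ^ n - 1 ∈ I ^ (p ^ padicValNat p n)) ∧
    (∀ (x : O) (r : ℕ), 0 < r →
      x ∈ (IsLocalRing.maximalIdeal O) ^ r →
      x ∉ (IsLocalRing.maximalIdeal O) ^ (r + 1) →
      ((1 + x) ^ n - 1 ∈ (IsLocalRing.maximalIdeal O) ^ (r * p ^ padicValNat p n) ∧
       (1 + x) ^ n - 1 ∉ (IsLocalRing.maximalIdeal O) ^ (r * p ^ padicValNat p n + 1))) := by
  haveI : Fact p.Prime := ⟨hp⟩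
  set k := padicValNat p n with hk
  set m := n / p ^ k with hmdef
  have hfac : n.factorization p = k := Nat.factorization_def n hp
  have hnm : p ^ k * m = n := by
    have := Nat.ordProj_mul_ordCompl_eq_self n p
    rwa [hfac] at this
  have hpm : ¬ p ∣ m := by
    have := Nat.not_dvd_ordCompl hp hn.ne'
    rwa [hfac] at this
  have keyR := aux_key hp (R := R) hnm
  have keyO := aux_key hp (R := O) hnm
  constructor
  · intro x hx
    obtain ⟨z, hz⟩ := keyR x
    rw [hz]
    exact Ideal.mul_mem_right _ _ (Ideal.pow_mem_pow hx _)
  · intro x r hr hxr hxr1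
    obtain ⟨ϖ, hϖ⟩ := IsDiscreteValuationRing.exists_irreducible O
    have hmax : IsLocalRing.maximalIdeal O = Ideal.span {ϖ} := hϖ.maximalIdeal_eq
    have hmem : ∀ (a : O) (s : ℕ), a ∈ (IsLocalRing.maximalIdeal O) ^ s ↔ ϖ ^ s ∣ a := by
      intro a s
      rw [hmax, Ideal.span_singleton_pow, Ideal.mem_span_singleton]
    -- x = ϖ^r * u with u a unit
    obtain ⟨c, hc⟩ := (hmem x r).mp hxr
    have hcu : IsUnit c := by
      by_contra hcu
      apply hxr1
      rw [hmem]
      have : ϖ ∣ c := by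
        rw [← Ideal.mem_span_singleton, ← hmax]
        exact hcu
      obtain ⟨d, hd⟩ := this
      exact ⟨d, by rw [hc, hd]; ring⟩
    obtain ⟨z, hz⟩ := keyO x
    -- the cofactor m + x^(p^k) * z is a unit
    have hxmem : x ^ p ^ k * z ∈ IsLocalRing.maximalIdeal O := by
      have hx1 : x ∈ IsLocalRing.maximalIdeal O := by
        have : (IsLocalRing.maximalIdeal O) ^ r ≤ IsLocalRing.maximalIdeal O := by
          conv_rhs => rw [← pow_one (IsLocalRing.maximalIdeal O)]
          exact Ideal.pow_le_pow_right hr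
        exact this hxr
      exact Ideal.mul_mem_right _ _ (Ideal.pow_mem_of_mem _ hx1 _ (pow_pos hp.pos k))
    have hwu : IsUnit ((m : O) + x ^ p ^ k * z) := by
      by_contra hw
      have h1 : (m : O) + x ^ p ^ k * z ∈ IsLocalRing.maximalIdeal O := hw
      have h2 : (m : O) ∈ IsLocalRing.maximalIdeal O := by
        have := Ideal.sub_mem _ h1 hxmem
        simpa using this
      exact (IsLocalRing.mem_maximalIdeal _).mp h2 (aux_unit hp hpm)
    -- now (1+x)^n - 1 = ϖ^(r * p^k) * (c^(p^k) * (m + x^(p^k) z)), unit cofactor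
    have heq : (1 + x) ^ n - 1 = ϖ ^ (r * p ^ k) * (c ^ p ^ k * ((m : O) + x ^ p ^ k * z)) := by
      rw [hz, hc, mul_pow, ← pow_mul]
      ring
    have hunit : IsUnit (c ^ p ^ k * ((m : O) + x ^ p ^ k * z)) := (hcu.pow _).mul hwu
    constructor
    · rw [hmem, heq]
      exact ⟨_, rfl⟩
    · rw [hmem, heq]
      rintro ⟨d, hd⟩
      have hϖ0 : ϖ ^ (r * p ^ k) ≠ 0 := pow_ne_zero _ hϖ.ne_zero
      have : c ^ p ^ k * ((m : O) + x ^ p ^ k * z) = ϖ * d := by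
        apply mul_left_cancel₀ hϖ0
        rw [hd, pow_succ]
        ring
      exact hϖ.not_isUnit (isUnit_of_dvd_unit ⟨d, this⟩ hunit)
end
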